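/- Let f be a three times continuously differentiable probability density on ℝ with compact support [a,b], positive on (a,b), whose critical points in (a,b) are finitely many and all nondegenerate (f'(x) = 0 implies f''(x) ≠ 0), and let m_1 < ⋯ < m_{r−1} denote the local minima of f in (a,b). Let K ⊂ (a,b) be a compact set containing all critical points of f in its interior, and let (g_n) be a sequence of twice continuously differentiable functions on ℝ such that g_n' → f' and g_n'' → f'' uniformly. Then there exists n_0 ∈ ℕ such that for every n ≥ n_0 the function g_n has exactly r − 1 local minima in K; consequently, the number of clusters of the modal clustering induced by g_n equals the number r of clusters of the modal clustering induced by f. -/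
import Mathlib

open MeasureTheory Filter Set

section Aux
open Set Filter

/-- If the derivative vanishes at `x` and is negative just to the right, `x` is not a
local minimum. -/
lemma aux_not_isLocalMin (h : ℝ → ℝ) (hc : Continuous h) (hd : Differentiable ℝ h)
    (x v : ℝ) (hxv : x < v) (hneg : ∀ y ∈ Ioo x v, deriv h y < 0) :
    ¬ IsLocalMin h x := by
  intro hmin
  have hanti : StrictAntiOn h (Icc x v) := by
    apply strictAntiOn_of_deriv_neg (convex_Icc x v) hc.continuousOn
    rwa [interior_Icc]
  have : ∀ᶠ y in nhdsWithin x (Ioi x), h x ≤ h y := hmin.filter_mono nhdsWithin_le_nhds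
  rcases ((this.and (Ioo_mem_nhdsGT_of_mem ⟨le_refl x, hxv⟩)).exists) with ⟨y, hy1, hy2⟩
  have : h y < h x := hanti (left_mem_Icc.2 hxv.le) ⟨hy2.1.le, hy2.2.le⟩ hy2.1
  linarith

/-- If the derivative vanishes at `x` and is strictly monotone on a surrounding interval,
then `x` is a local minimum. -/
lemma aux_isLocalMin (h : ℝ → ℝ) (hc : Continuous h) (hd : Differentiable ℝ h)
    (l x u : ℝ) (hlx : l < x) (hxu : x < u) (hx0 : deriv h x = 0)
    (hmono : StrictMonoOn (deriv h) (Icc l u)) : IsLocalMin h x := by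
  have hanti : AntitoneOn h (Icc l x) := by
    apply antitoneOn_of_deriv_nonpos (convex_Icc l x) hc.continuousOn
    · exact (hd.differentiableOn)
    · intro y hy
      rw [interior_Icc] at hy
      have := hmono (Icc_subset_Icc (le_refl l) hxu.le ⟨hy.1.le, hy.2.le⟩)
        ⟨hlx.le, hxu.le⟩ hy.2
      linarith [hx0 ▸ this]
  have hmon : MonotoneOn h (Icc x u) := by
    apply monotoneOn_of_deriv_nonneg (convex_Icc x u) hc.continuousOn
    · exact (hd.differentiableOn)
    · intro y hy
      rw [interior_Icc] at hy
      have := hmono ⟨hlx.le, hxu.le⟩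
        (Icc_subset_Icc hlx.le (le_refl u) ⟨hy.1.le, hy.2.le⟩) hy.1
      linarith [hx0 ▸ this]
  filter_upwards [Ioo_mem_nhds hlx hxu] with y hy
  rcases le_total y x with hyx | hxy
  · exact hanti ⟨hy.1.le, hyx⟩ (right_mem_Icc.2 hlx.le) hyx
  · exact hmon (left_mem_Icc.2 hxu.le) ⟨hxy, hy.2.le⟩ hxy

/-- A finite set of reals is uniformly separated. -/
lemma aux_sep (S : Set ℝ) (hS : S.Finite) :
    ∃ ε > 0, ∀ p ∈ S, ∀ q ∈ S, p ≠ q → 2 * ε ≤ |p - q| := by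
  classical
  have : ∀ T : Finset ℝ, ∃ ε > 0, ∀ p ∈ T, ∀ q ∈ T, p ≠ q → 2 * ε ≤ |p - q| := by
    intro T
    set P := (T ×ˢ T).filter (fun pq => pq.1 ≠ pq.2) with hP
    by_cases hne : P.Nonempty
    · set D := P.image (fun pq => |pq.1 - pq.2|) with hD
      have hDne : D.Nonempty := hne.image _
      refine ⟨D.min' hDne / 2, ?_, ?_⟩
      · have hmm : D.min' hDne ∈ D := D.min'_mem hDne
        obtain ⟨pq, hpq, heq⟩ := Finset.mem_image.1 hmm
        have hpq' := Finset.mem_filter.1 hpq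
        have : 0 < |pq.1 - pq.2| := abs_pos.2 (sub_ne_zero.2 hpq'.2)
        linarith [heq ▸ this]
      · intro p hp q hq hpq
        have hmem : |p - q| ∈ D :=
          Finset.mem_image.2 ⟨(p, q), Finset.mem_filter.2 ⟨Finset.mem_product.2 ⟨hp, hq⟩, hpq⟩, rfl⟩
        have := D.min'_le _ hmem
        linarith
    · refine ⟨1, one_pos, fun p hp q hq hpq => absurd ?_ hne⟩
      exact ⟨(p, q), Finset.mem_filter.2 ⟨Finset.mem_product.2 ⟨hp, hq⟩, hpq⟩⟩
  obtain ⟨ε, hε, h⟩ := this hS.toFinset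
  exact ⟨ε, hε, fun p hp q hq => h p (hS.mem_toFinset.2 hp) q (hS.mem_toFinset.2 hq)⟩

/-- A finite set of positive reals has a positive lower bound. -/
lemma aux_pos_lb (S : Set ℝ) (hS : S.Finite) (hpos : ∀ x ∈ S, 0 < x) :
    ∃ η > 0, ∀ x ∈ S, η ≤ x := by
  classical
  rcases S.eq_empty_or_nonempty with h | h
  · exact ⟨1, one_pos, by simp [h]⟩
  · have hne : hS.toFinset.Nonempty := by rwa [Set.Finite.toFinset_nonempty]
    refine ⟨hS.toFinset.min' hne, hpos _ (hS.mem_toFinset.1 (hS.toFinset.min'_mem hne)), ?_⟩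
    exact fun x hx => hS.toFinset.min'_le x (hS.mem_toFinset.2 hx)

end Aux

/-- If `f` is a `C³` probability density on `ℝ` with compact support `[a,b]`, positive on
`(a,b)`, with finitely many nondegenerate critical points in `(a,b)` and local minima
`m₁ < ⋯ < m_{r-1}`, `K ⊆ (a,b)` is a compact set containing all critical points of `f` in
its interior, and `gₙ` are `C²` functions with `gₙ' → f'` and `gₙ'' → f''` uniformly, then
eventually `gₙ` has exactly `r - 1` local minima in `K`; consequently the number of clusters
of the modal clustering induced by `gₙ` (one more than the number of local minima) equals
the number `r` of clusters of the modal clustering induced by `f`. -/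
theorem modal_clustering_number_of_clusters_consistent
    (f : ℝ → ℝ) (hf : ContDiff ℝ 3 f)
    (a b : ℝ) (hab : a < b)
    (hf_nonneg : ∀ x, 0 ≤ f x)
    (hf_int : ∫ x, f x = 1)
    (hf_supp : tsupport f = Set.Icc a b)
    (hf_pos : ∀ x ∈ Set.Ioo a b, 0 < f x)
    (hcrit_fin : {x | x ∈ Set.Ioo a b ∧ deriv f x = 0}.Finite)
    (hnondeg : ∀ x ∈ Set.Ioo a b, deriv f x = 0 → deriv (deriv f) x ≠ 0)
    (r : ℕ) (hr : 1 ≤ r)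
    (m : Fin (r - 1) → ℝ) (hm_mono : StrictMono m)
    (hm_mem : ∀ j, m j ∈ Set.Ioo a b)
    (hm_min : {x | x ∈ Set.Ioo a b ∧ IsLocalMin f x} = Set.range m)
    (K : Set ℝ) (hK : IsCompact K) (hK_sub : K ⊆ Set.Ioo a b)
    (hK_crit : {x | x ∈ Set.Ioo a b ∧ deriv f x = 0} ⊆ interior K)
    (g : ℕ → ℝ → ℝ) (hg : ∀ n, ContDiff ℝ 2 (g n))
    (hg1 : TendstoUniformly (fun n => deriv (g n)) (deriv f) atTop)
    (hg2 : TendstoUniformly (fun n => deriv (deriv (g n))) (deriv (deriv f)) atTop) :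
    ∃ n₀ : ℕ, ∀ n ≥ n₀,
      {x | x ∈ K ∧ IsLocalMin (g n) x}.ncard = r - 1 ∧
      {x | x ∈ K ∧ IsLocalMin (g n) x}.ncard + 1 = r := by
  classical
  -- Regularity facts
  have hf2 : ContDiff ℝ 2 (deriv f) := by
    rw [show (3 : WithTop ℕ∞) = 2 + 1 by norm_num, contDiff_succ_iff_deriv] at hf
    exact hf.2.2
  have hfc : Continuous f := hf.continuous
  have hfd : Differentiable ℝ f := hf.differentiable (by norm_num)
  have hf1c : Continuous (deriv f) := hf2.continuous
  have hf1d : Differentiable ℝ (deriv f) := hf2.differentiable (by norm_num)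
  have hf2c : Continuous (deriv (deriv f)) := hf2.continuous_deriv (by norm_num)
  have hgc : ∀ n, Continuous (g n) := fun n => (hg n).continuous
  have hgd : ∀ n, Differentiable ℝ (g n) := fun n => (hg n).differentiable (by norm_num)
  have hg1c : ∀ n, Continuous (deriv (g n)) := fun n => (hg n).continuous_deriv (by norm_num)
  have hg1d : ∀ n, Differentiable ℝ (deriv (g n)) := by
    intro n
    have := hg n
    rw [show (2 : WithTop ℕ∞) = 1 + 1 by norm_num, contDiff_succ_iff_deriv] at this
    exact this.2.2.differentiable (by norm_num)
  -- The critical set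
  set C : Set ℝ := {x | x ∈ Set.Ioo a b ∧ deriv f x = 0} with hCdef
  -- the minima belong to C
  have hmloc : ∀ j, IsLocalMin f (m j) := by
    intro j
    have : m j ∈ Set.range m := ⟨j, rfl⟩
    rw [← hm_min] at this
    exact this.2
  have hmC : ∀ j, m j ∈ C := fun j => ⟨hm_mem j, (hmloc j).deriv_eq_zero⟩
  -- separation of C
  obtain ⟨ε₀, hε₀, hsep⟩ := aux_sep C hcrit_fin
  -- choose radii around critical points
  have key : ∀ p ∈ C, ∃ ρ : ℝ, 0 < ρ ∧ ρ ≤ ε₀ / 2 ∧ Set.Icc (p - ρ) (p + ρ) ⊆ interior K ∧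
      ∀ x ∈ Set.Icc (p - ρ) (p + ρ), |deriv (deriv f) x - deriv (deriv f) p|
        ≤ |deriv (deriv f) p| / 2 := by
    intro p hp
    have hp2 : deriv (deriv f) p ≠ 0 := hnondeg p hp.1 hp.2
    have hU : IsOpen (interior K ∩
        {x | |deriv (deriv f) x - deriv (deriv f) p| < |deriv (deriv f) p| / 2}) := by
      apply isOpen_interior.inter
      exact isOpen_lt ((hf2c.sub continuous_const).abs) continuous_const
    have hpU : p ∈ interior K ∩
        {x | |deriv (deriv f) x - deriv (deriv f) p| < |deriv (deriv f) p| / 2} := by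
      refine ⟨hK_crit hp, ?_⟩
      simp only [Set.mem_setOf_eq, sub_self, abs_zero]
      positivity
    obtain ⟨t, ht, hball⟩ := Metric.isOpen_iff.1 hU p hpU
    refine ⟨min (t / 2) (ε₀ / 2), by positivity, min_le_right _ _, ?_, ?_⟩
    · intro x hx
      have hxball : x ∈ Metric.ball p t := by
        rw [Metric.mem_ball, Real.dist_eq]
        have h1 : min (t / 2) (ε₀ / 2) ≤ t / 2 := min_le_left _ _
        have h2 : |x - p| ≤ min (t / 2) (ε₀ / 2) :=
          abs_le.2 ⟨by linarith [hx.1], by linarith [hx.2]⟩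
        calc |x - p| ≤ min (t / 2) (ε₀ / 2) := h2
          _ ≤ t / 2 := h1
          _ < t := by linarith
      exact (hball hxball).1
    · intro x hx
      have hxball : x ∈ Metric.ball p t := by
        rw [Metric.mem_ball, Real.dist_eq]
        have h1 : min (t / 2) (ε₀ / 2) ≤ t / 2 := min_le_left _ _
        have h2 : |x - p| ≤ min (t / 2) (ε₀ / 2) :=
          abs_le.2 ⟨by linarith [hx.1], by linarith [hx.2]⟩
        calc |x - p| ≤ min (t / 2) (ε₀ / 2) := h2
          _ ≤ t / 2 := h1
          _ < t := by linarith
      exact le_of_lt (hball hxball).2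
  choose! ρ hρ1 hρ2 hρ3 hρ4 using key
  -- second derivative bounds on the intervals
  have hf2lb : ∀ p ∈ C, 0 < deriv (deriv f) p →
      ∀ x ∈ Set.Icc (p - ρ p) (p + ρ p), deriv (deriv f) p / 2 ≤ deriv (deriv f) x := by
    intro p hp hpos x hx
    have := hρ4 p hp x hx
    rw [abs_of_pos hpos] at this
    cases' abs_le.1 this with h1 h2
    linarith
  have hf2ub : ∀ p ∈ C, deriv (deriv f) p < 0 →
      ∀ x ∈ Set.Icc (p - ρ p) (p + ρ p), deriv (deriv f) x ≤ deriv (deriv f) p / 2 := by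
    intro p hp hneg x hx
    have := hρ4 p hp x hx
    rw [abs_of_neg hneg] at this
    cases' abs_le.1 this with h1 h2
    linarith
  -- intervals around distinct critical points are disjoint
  have hdisj : ∀ p ∈ C, ∀ q ∈ C, p ≠ q →
      Disjoint (Set.Icc (p - ρ p) (p + ρ p)) (Set.Icc (q - ρ q) (q + ρ q)) := by
    intro p hp q hq hpq
    rw [Set.disjoint_left]
    intro x hxp hxq
    have h1 : |x - p| ≤ ρ p := abs_le.2 ⟨by linarith [hxp.1], by linarith [hxp.2]⟩
    have h2 : |x - q| ≤ ρ q := abs_le.2 ⟨by linarith [hxq.1], by linarith [hxq.2]⟩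
    have := hsep p hp q hq hpq
    have htri : |p - q| ≤ |x - p| + |x - q| := by
      calc |p - q| = |(x - q) - (x - p)| := by ring_nf
        _ ≤ |x - q| + |x - p| := abs_sub _ _
        _ = |x - p| + |x - q| := by ring
    have := hρ2 p hp
    have := hρ2 q hq
    linarith
  -- on minima intervals f' is strictly monotone
  have hmono : ∀ p ∈ C, 0 < deriv (deriv f) p →
      StrictMonoOn (deriv f) (Set.Icc (p - ρ p) (p + ρ p)) := by
    intro p hp hpos
    apply strictMonoOn_of_deriv_pos (convex_Icc _ _) hf1c.continuousOn
    intro x hx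
    rw [interior_Icc] at hx
    have := hf2lb p hp hpos x (Set.Ioo_subset_Icc_self hx)
    linarith
  -- each m j has positive second derivative
  have hm2pos : ∀ j, 0 < deriv (deriv f) (m j) := by
    intro j
    rcases (hnondeg (m j) (hm_mem j) (hmC j).2).lt_or_gt with hneg | hpos
    · exfalso
      have hloc := hmloc j
      have hρ := hρ1 (m j) (hmC j)
      apply aux_not_isLocalMin f hfc hfd (m j) (m j + ρ (m j)) (by linarith) _ hloc
      intro y hy
      have hmem : y ∈ Set.Icc (m j - ρ (m j)) (m j + ρ (m j)) :=
        ⟨by linarith [hy.1], hy.2.le⟩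
      have hanti : StrictAntiOn (deriv f) (Set.Icc (m j - ρ (m j)) (m j + ρ (m j))) := by
        apply strictAntiOn_of_deriv_neg (convex_Icc _ _) hf1c.continuousOn
        intro x hx
        rw [interior_Icc] at hx
        have := hf2ub (m j) (hmC j) hneg x (Set.Ioo_subset_Icc_self hx)
        linarith
      have := hanti (Set.mem_Icc.2 ⟨by linarith, by linarith⟩) hmem hy.1
      rw [(hmC j).2] at this
      exact this
    · exact hpos
  -- the set away from the critical intervals
  set K' : Set ℝ := K \ ⋃ p ∈ C, Set.Ioo (p - ρ p) (p + ρ p) with hK'def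
  have hK'c : IsCompact K' :=
    hK.diff (isOpen_biUnion fun p _ => isOpen_Ioo)
  have hδex : ∃ δ > 0, ∀ x ∈ K', δ ≤ |deriv f x| := by
    rcases K'.eq_empty_or_nonempty with h | h
    · exact ⟨1, one_pos, by simp [h]⟩
    · obtain ⟨x₀, hx₀, hmin⟩ := hK'c.exists_isMinOn h (hf1c.abs.continuousOn)
      refine ⟨|deriv f x₀|, ?_, fun x hx => hmin hx⟩
      have hne : deriv f x₀ ≠ 0 := by
        intro h0
        have hx₀C : x₀ ∈ C := ⟨hK_sub hx₀.1, h0⟩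
        have hρ := hρ1 x₀ hx₀C
        exact hx₀.2 (Set.mem_biUnion hx₀C
          (Set.mem_Ioo.2 ⟨by linarith, by linarith⟩))
      exact abs_pos.2 hne
  obtain ⟨δ, hδpos, hδ⟩ := hδex
  -- the uniform closeness threshold
  set S : Set ℝ := {δ} ∪ ((fun p => |deriv (deriv f) p| / 4) '' C)
      ∪ ((fun j => deriv f (m j + ρ (m j))) '' Set.univ)
      ∪ ((fun j => -deriv f (m j - ρ (m j))) '' Set.univ) with hSdef
  have hSfin : S.Finite := by
    refine (((Set.finite_singleton δ).union (hcrit_fin.image _)).union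
      ((Set.finite_univ.image _))).union (Set.finite_univ.image _)
  have hfend : ∀ j : Fin (r - 1), 0 < deriv f (m j + ρ (m j)) ∧
      deriv f (m j - ρ (m j)) < 0 := by
    intro j
    have hρ := hρ1 (m j) (hmC j)
    have hmo := hmono (m j) (hmC j) (hm2pos j)
    have hmem : m j ∈ Set.Icc (m j - ρ (m j)) (m j + ρ (m j)) :=
      Set.mem_Icc.2 ⟨by linarith, by linarith⟩
    constructor
    · have := hmo hmem (Set.mem_Icc.2 ⟨by linarith, le_refl _⟩) (by linarith)
      rw [(hmC j).2] at this
      exact this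
    · have := hmo (Set.mem_Icc.2 ⟨le_refl _, by linarith⟩) hmem (by linarith)
      rw [(hmC j).2] at this
      exact this
  have hSpos : ∀ y ∈ S, 0 < y := by
    intro y hy
    rcases hy with ((hy | hy) | hy) | hy
    · rw [Set.mem_singleton_iff] at hy; exact hy ▸ hδpos
    · obtain ⟨p, hp, rfl⟩ := hy
      have h0 := hnondeg p hp.1 hp.2
      have h0' : 0 < |deriv (deriv f) p| := abs_pos.2 h0
      show 0 < |deriv (deriv f) p| / 4
      linarith
    · obtain ⟨j, _, rfl⟩ := hy
      exact (hfend j).1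
    · obtain ⟨j, _, rfl⟩ := hy
      show 0 < -deriv f (m j - ρ (m j))
      linarith [(hfend j).2]
  obtain ⟨η, hηpos, hη⟩ := aux_pos_lb S hSfin hSpos
  have hηδ : η ≤ δ := hη δ (Or.inl (Or.inl (Or.inl rfl)))
  have hη2 : ∀ p ∈ C, η ≤ |deriv (deriv f) p| / 4 :=
    fun p hp => hη _ (Or.inl (Or.inl (Or.inr ⟨p, hp, rfl⟩)))
  have hηp : ∀ j : Fin (r - 1), η ≤ deriv f (m j + ρ (m j)) :=
    fun j => hη _ (Or.inl (Or.inr ⟨j, Set.mem_univ j, rfl⟩))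
  have hηm : ∀ j : Fin (r - 1), η ≤ -deriv f (m j - ρ (m j)) :=
    fun j => hη _ (Or.inr ⟨j, Set.mem_univ j, rfl⟩)
  -- eventual uniform closeness
  have hev := (Metric.tendstoUniformly_iff.mp hg1 η hηpos).and
    (Metric.tendstoUniformly_iff.mp hg2 η hηpos)
  obtain ⟨n₀, hn₀⟩ := eventually_atTop.1 hev
  refine ⟨n₀, fun n hn => ?_⟩
  obtain ⟨h1, h2⟩ := hn₀ n hn
  have h1' : ∀ y, |deriv f y - deriv (g n) y| < η := by
    intro y; have := h1 y; rwa [Real.dist_eq] at this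
  have h2' : ∀ y, |deriv (deriv f) y - deriv (deriv (g n)) y| < η := by
    intro y; have := h2 y; rwa [Real.dist_eq] at this
  -- second derivative of g n is positive on the minima intervals
  have hgpp : ∀ j : Fin (r - 1), ∀ y ∈ Set.Icc (m j - ρ (m j)) (m j + ρ (m j)),
      0 < deriv (deriv (g n)) y := by
    intro j y hy
    have hlb := hf2lb (m j) (hmC j) (hm2pos j) y hy
    have hb := abs_lt.1 (h2' y)
    have hq := hη2 (m j) (hmC j)
    rw [abs_of_pos (hm2pos j)] at hq
    linarith
  have hgmono : ∀ j : Fin (r - 1),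
      StrictMonoOn (deriv (g n)) (Set.Icc (m j - ρ (m j)) (m j + ρ (m j))) := by
    intro j
    apply strictMonoOn_of_deriv_pos (convex_Icc _ _) (hg1c n).continuousOn
    intro y hy
    rw [interior_Icc] at hy
    exact hgpp j y (Set.Ioo_subset_Icc_self hy)
  -- endpoint signs for g n
  have hgend : ∀ j : Fin (r - 1), deriv (g n) (m j - ρ (m j)) < 0 ∧
      0 < deriv (g n) (m j + ρ (m j)) := by
    intro j
    constructor
    · have := abs_lt.1 (h1' (m j - ρ (m j)))
      have := hηm j
      linarith
    · have := abs_lt.1 (h1' (m j + ρ (m j)))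
      have := hηp j
      linarith
  -- existence of a zero of (g n)' in each minima interval
  have hex : ∀ j : Fin (r - 1), ∃ y ∈ Set.Ioo (m j - ρ (m j)) (m j + ρ (m j)),
      deriv (g n) y = 0 := by
    intro j
    have hρ := hρ1 (m j) (hmC j)
    have hsub := intermediate_value_Ioo (show m j - ρ (m j) ≤ m j + ρ (m j) by linarith)
      (hg1c n).continuousOn
    have h0 : (0 : ℝ) ∈ Set.Ioo (deriv (g n) (m j - ρ (m j))) (deriv (g n) (m j + ρ (m j))) :=
      ⟨(hgend j).1, (hgend j).2⟩
    obtain ⟨y, hy, hy0⟩ := hsub h0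
    exact ⟨y, hy, hy0⟩
  choose xx hx1 hx0 using hex
  -- properties of the chosen minima
  have hxK : ∀ j, xx j ∈ K := by
    intro j
    exact interior_subset (hρ3 (m j) (hmC j) (Set.Ioo_subset_Icc_self (hx1 j)))
  have hlocmin : ∀ j, IsLocalMin (g n) (xx j) := fun j =>
    aux_isLocalMin (g n) (hgc n) (hgd n) _ _ _ (hx1 j).1 (hx1 j).2 (hx0 j) (hgmono j)
  have hxinj : Function.Injective xx := by
    intro j k hjk
    by_contra hne
    have hmne : m j ≠ m k := fun h => hne (hm_mono.injective h)
    have hd := hdisj (m j) (hmC j) (m k) (hmC k) hmne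
    rw [Set.disjoint_left] at hd
    exact hd (Set.Ioo_subset_Icc_self (hx1 j))
      (hjk ▸ Set.Ioo_subset_Icc_self (hx1 k))
  -- the local minima of g n in K are exactly the xx j
  have hSeq : {y | y ∈ K ∧ IsLocalMin (g n) y} = Set.range xx := by
    ext y
    constructor
    · rintro ⟨hyK, hymin⟩
      have hy0 : deriv (g n) y = 0 := hymin.deriv_eq_zero
      have hyU : y ∈ ⋃ p ∈ C, Set.Ioo (p - ρ p) (p + ρ p) := by
        by_contra hyU
        have hyK' : y ∈ K' := ⟨hyK, hyU⟩
        have hd1 := hδ y hyK'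
        have hd2 := abs_lt.1 (h1' y)
        rw [hy0, sub_zero] at hd2
        have : |deriv f y| < η := abs_lt.2 hd2
        linarith [abs_nonneg (deriv f y)]
      simp only [Set.mem_iUnion, exists_prop] at hyU
      obtain ⟨p, hpC, hyIoo⟩ := hyU
      rcases (hnondeg p hpC.1 hpC.2).lt_or_gt with hneg | hpos
      · -- near a local max : impossible
        exfalso
        have hgnn : ∀ z ∈ Set.Icc (p - ρ p) (p + ρ p), deriv (deriv (g n)) z < 0 := by
          intro z hz
          have hub := hf2ub p hpC hneg z hz
          have hb := abs_lt.1 (h2' z)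
          have hq := hη2 p hpC
          rw [abs_of_neg hneg] at hq
          linarith
        have hganti : StrictAntiOn (deriv (g n)) (Set.Icc (p - ρ p) (p + ρ p)) := by
          apply strictAntiOn_of_deriv_neg (convex_Icc _ _) (hg1c n).continuousOn
          intro z hz
          rw [interior_Icc] at hz
          exact hgnn z (Set.Ioo_subset_Icc_self hz)
        apply aux_not_isLocalMin (g n) (hgc n) (hgd n) y (p + ρ p) hyIoo.2 _ hymin
        intro z hz
        have hzI : z ∈ Set.Icc (p - ρ p) (p + ρ p) :=
          ⟨by linarith [hz.1, hyIoo.1], hz.2.le⟩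
        have := hganti ⟨hyIoo.1.le, hyIoo.2.le⟩ hzI hz.1
        rw [hy0] at this
        exact this
      · -- near a local min of f : p must be some m j
        have hploc : IsLocalMin f p := by
          have hρ := hρ1 p hpC
          exact aux_isLocalMin f hfc hfd (p - ρ p) p (p + ρ p) (by linarith)
            (by linarith) hpC.2 (hmono p hpC hpos)
        have hpmem : p ∈ {x | x ∈ Set.Ioo a b ∧ IsLocalMin f x} := ⟨hpC.1, hploc⟩
        rw [hm_min] at hpmem
        obtain ⟨j, rfl⟩ := hpmem
        have : y = xx j := by
          apply (hgmono j).injOn (Set.Ioo_subset_Icc_self hyIoo)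
            (Set.Ioo_subset_Icc_self (hx1 j))
          rw [hy0, hx0 j]
        exact ⟨j, this.symm⟩
    · rintro ⟨j, rfl⟩
      exact ⟨hxK j, hlocmin j⟩
  have hcard : {y | y ∈ K ∧ IsLocalMin (g n) y}.ncard = r - 1 := by
    rw [hSeq, ← Set.image_univ, Set.ncard_image_of_injective _ hxinj, Set.ncard_univ,
      Nat.card_eq_fintype_card, Fintype.card_fin]
  exact ⟨hcard, by omega⟩
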